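/- arXiv:1504.08338 — 6 statements merged into one kernel-verified Lean document; each statement's English description precedes it below -/
import Mathlib

section
/- For every real number q > 0, f_q(0, δ(q)) = 0; that is, the function f_q vanishes at the point corresponding to the trivial representation of the fusion algebra of (G₂)_q. -/
/-- The loop value δ(q) of the trivalent category (G₂)_q. -/
noncomputable def G2del (q : ℝ) : ℝ :=
  q ^ 10 + q ^ 8 + q ^ 2 + 1 + 1 / q ^ 2 + 1 / q ^ 8 + 1 / q ^ 10

/-- The triangle coefficient c(q) of (G₂)_q. -/
noncomputable def G2c (q : ℝ) : ℝ :=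
  -((q ^ 2 - 1 + 1 / q ^ 2) / (q ^ 4 + 1 / q ^ 4))

/-- The square root ξ(q) appearing in the minimal idempotents of Mor(2,2) of (G₂)_q. -/
noncomputable def G2xi (q : ℝ) : ℝ :=
  (1 + q ^ 2) ^ 2 * (1 - q ^ 2 + q ^ 6 - q ^ 8 + q ^ 10 - q ^ 14 + q ^ 16) /
    (q ^ 6 * (1 + q ^ 8))

/-- The function f_q(α,t) = γ_{α,t}(s♯·s) built from the minimal idempotent y₋. -/
noncomputable def G2f (q α t : ℝ) : ℝ :=
  G2del q * (-(G2del q + 1) * (G2c q) ^ 2 - G2xi q + 1) / (-2 * G2xi q)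
    + t ^ 2 * (G2del q * ((G2c q) ^ 2 - 2 * G2c q - 2) + G2xi q + (G2c q) ^ 2
        - 2 * G2c q - 1) / (-2 * G2del q * G2xi q)
    - α * (G2del q * (G2c q + 2) * G2c q - G2xi q + (G2c q) ^ 2 + 1) / (-2 * G2xi q)
    + t * (G2del q * G2c q + G2del q + G2c q) / (-G2xi q)

/-- f_q vanishes at the point (0, δ(q)) corresponding to the trivial representation. -/
theorem G2_f_trivial_point (q : ℝ) (hq : 0 < q) : G2f q 0 (G2del q) = 0 := by
  have hq0 : q ≠ 0 := hq.ne'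
  have hP : 0 < 1 - q ^ 2 + q ^ 6 - q ^ 8 + q ^ 10 - q ^ 14 + q ^ 16 := by
    nlinarith [sq_nonneg (q^8 - q^6), sq_nonneg (q^8 - 1), sq_nonneg (q^5 - q^3),
      sq_nonneg (q^7 - q), sq_nonneg (q - 1), sq_nonneg (q^2 - 1), sq_nonneg q,
      sq_nonneg (q^8 - q^7), sq_nonneg (q^4 - q^3), pow_pos hq 2, pow_pos hq 6]
  have hxi : G2xi q ≠ 0 := by
    have h : 0 < G2xi q := by unfold G2xi; positivity
    exact h.ne'
  have hdel : G2del q ≠ 0 := by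
    have h : 0 < G2del q := by unfold G2del; positivity
    exact h.ne'
  have h4 : q ^ 4 + 1 / q ^ 4 ≠ 0 := by positivity
  unfold G2f G2del G2c G2xi at *
  field_simp at *
  ring_nf
end

section
/- For every real number q > 0, the partial derivative of f_q with respect to α (which is constant, equal to (δ(c+2)c − ξ + c² + 1)/(2ξ)) equals −(1 + q² + 2q⁴ + q⁶ + q⁸)/(q + q³)², and this value is strictly negative. -/
lemma Ppos (q : ℝ) (hq : 0 < q) :
    0 < 1 - q ^ 2 + q ^ 6 - q ^ 8 + q ^ 10 - q ^ 14 + q ^ 16 := by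
  nlinarith [sq_nonneg (q^8 - q), sq_nonneg (q^7 - q^4), sq_nonneg (q^5 - q^3),
    sq_nonneg (q^8 - q^7), sq_nonneg (q^3 - 1), sq_nonneg (q^5 - q), sq_nonneg q,
    pow_pos hq 2, pow_pos hq 10, pow_pos hq 6]

lemma xipos (q : ℝ) (hq : 0 < q) : 0 < G2xi q := by
  unfold G2xi
  have h := Ppos q hq
  positivity

lemma keyid (q : ℝ) (hq : 0 < q) :
    (G2del q * (G2c q + 2) * G2c q - G2xi q + (G2c q) ^ 2 + 1) / (2 * G2xi q)
      = -((1 + q ^ 2 + 2 * q ^ 4 + q ^ 6 + q ^ 8) / (q + q ^ 3) ^ 2) := by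
  have hq0 : q ≠ 0 := ne_of_gt hq
  have hxi : G2xi q ≠ 0 := ne_of_gt (xipos q hq)
  have hP : (1 - q ^ 2 + q ^ 6 - q ^ 8 + q ^ 10 - q ^ 14 + q ^ 16) ≠ 0 :=
    ne_of_gt (Ppos q hq)
  have h4 : q ^ 4 + 1 / q ^ 4 ≠ 0 := by positivity
  have h8 : (1 : ℝ) + q ^ 8 ≠ 0 := by positivity
  have h13 : q + q ^ 3 ≠ 0 := by positivity
  unfold G2del G2c G2xi
  field_simp
  ring

/-- The partial derivative of f_q in the α-direction is constant, equal to
(δ(c+2)c − ξ + c² + 1)/(2ξ) = −(1 + q² + 2q⁴ + q⁶ + q⁸)/(q + q³)², which is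
strictly negative. -/
theorem G2_f_partial_alpha (q : ℝ) (hq : 0 < q) :
    (∀ α t : ℝ, HasDerivAt (fun a => G2f q a t)
        (-((1 + q ^ 2 + 2 * q ^ 4 + q ^ 6 + q ^ 8) / (q + q ^ 3) ^ 2)) α)
      ∧ (G2del q * (G2c q + 2) * G2c q - G2xi q + (G2c q) ^ 2 + 1) / (2 * G2xi q)
          = -((1 + q ^ 2 + 2 * q ^ 4 + q ^ 6 + q ^ 8) / (q + q ^ 3) ^ 2)
      ∧ -((1 + q ^ 2 + 2 * q ^ 4 + q ^ 6 + q ^ 8) / (q + q ^ 3) ^ 2) < 0 := by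
  have hxi : G2xi q ≠ 0 := ne_of_gt (xipos q hq)
  have hkey := keyid q hq
  refine ⟨?_, hkey, ?_⟩
  · intro α t
    set N := G2del q * (G2c q + 2) * G2c q - G2xi q + (G2c q) ^ 2 + 1 with hN
    have hD : HasDerivAt (fun a : ℝ => G2f q a t) (-(N / (-2 * G2xi q))) α := by
      have h1 : HasDerivAt (fun a : ℝ => a * N / (-2 * G2xi q))
          (N / (-2 * G2xi q)) α := by
        have := (hasDerivAt_id α).mul_const (N / (-2 * G2xi q))
        simpa [mul_div_assoc] using this
      refine ((((hasDerivAt_const α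
          (G2del q * (-(G2del q + 1) * (G2c q) ^ 2 - G2xi q + 1) / (-2 * G2xi q))).add
          (hasDerivAt_const α (t ^ 2 * (G2del q * ((G2c q) ^ 2 - 2 * G2c q - 2) + G2xi q
            + (G2c q) ^ 2 - 2 * G2c q - 1) / (-2 * G2del q * G2xi q)))).sub h1).add
          (hasDerivAt_const α (t * (G2del q * G2c q + G2del q + G2c q) / (-G2xi q)))).congr_deriv ?_
      ring
    have : -(N / (-2 * G2xi q)) = N / (2 * G2xi q) := by ring
    rw [this, hkey] at hD
    exact hD
  · have hpos : 0 < (1 + q ^ 2 + 2 * q ^ 4 + q ^ 6 + q ^ 8) / (q + q ^ 3) ^ 2 := by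
      positivity
    linarith
end

section
/- For every real number q > 0, the partial derivative of f_q with respect to t at the point (0, δ(q)), namely 2δ(q)·(δ(c² − 2c − 2) + ξ + c² − 2c − 1)/(−2δξ) + (δc + δ + c)/(−ξ), equals (q² − 1)²(1 + q² + q⁴)/q⁴; in particular it is strictly positive for all q > 0 with q ≠ 1, and it vanishes if and only if q = 1. -/
/-- The partial derivative of f_q with respect to t at (0, δ(q)), namely
2δ·(δ(c²−2c−2)+ξ+c²−2c−1)/(−2δξ) + (δc+δ+c)/(−ξ), equals (q²−1)²(1+q²+q⁴)/q⁴;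
it is strictly positive for q ≠ 1 and vanishes iff q = 1. -/
theorem G2_f_partial_t_at_trivial (q : ℝ) (hq : 0 < q) :
    HasDerivAt (fun t => G2f q 0 t)
        (2 * G2del q * (G2del q * ((G2c q) ^ 2 - 2 * G2c q - 2) + G2xi q + (G2c q) ^ 2
            - 2 * G2c q - 1) / (-2 * G2del q * G2xi q)
          + (G2del q * G2c q + G2del q + G2c q) / (-G2xi q)) (G2del q)
      ∧ 2 * G2del q * (G2del q * ((G2c q) ^ 2 - 2 * G2c q - 2) + G2xi q + (G2c q) ^ 2
            - 2 * G2c q - 1) / (-2 * G2del q * G2xi q)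
          + (G2del q * G2c q + G2del q + G2c q) / (-G2xi q)
          = (q ^ 2 - 1) ^ 2 * (1 + q ^ 2 + q ^ 4) / q ^ 4
      ∧ (q ≠ 1 → 0 < (q ^ 2 - 1) ^ 2 * (1 + q ^ 2 + q ^ 4) / q ^ 4)
      ∧ ((q ^ 2 - 1) ^ 2 * (1 + q ^ 2 + q ^ 4) / q ^ 4 = 0 ↔ q = 1) := by
  have hq0 : q ≠ 0 := ne_of_gt hq
  have hp : 0 < 1 - q ^ 2 + q ^ 6 - q ^ 8 + q ^ 10 - q ^ 14 + q ^ 16 := by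
    nlinarith [sq_nonneg (q^8 - q^6), sq_nonneg (q^5 - q^3), sq_nonneg (q^3 - q),
      sq_nonneg (q^8 - 1), sq_nonneg (q^7 - q), sq_nonneg q, sq_nonneg (q^2-1),
      pow_pos hq 2, pow_pos hq 6, pow_pos hq 10]
  have hδ : 0 < G2del q := by unfold G2del; positivity
  have hξ : G2xi q ≠ 0 := by
    unfold G2xi; positivity
  refine ⟨?_, ?_, ?_, ?_⟩
  · have h2 : HasDerivAt (fun t : ℝ => t ^ 2) (2 * G2del q) (G2del q) := by
      simpa using hasDerivAt_pow 2 (G2del q)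
    have h3 := ((h2.mul_const (G2del q * ((G2c q) ^ 2 - 2 * G2c q - 2) + G2xi q
      + (G2c q) ^ 2 - 2 * G2c q - 1)).div_const (-2 * G2del q * G2xi q))
    have h4 := (((hasDerivAt_id (G2del q)).mul_const
      (G2del q * G2c q + G2del q + G2c q)).div_const (-G2xi q))
    have h5 := ((h3.const_add (G2del q * (-(G2del q + 1) * (G2c q) ^ 2 - G2xi q + 1)
      / (-2 * G2xi q))).sub_const ((0:ℝ) * (G2del q * (G2c q + 2) * G2c q - G2xi q
      + (G2c q) ^ 2 + 1) / (-2 * G2xi q))).add h4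
    refine h5.congr_deriv ?_
    ring
  · have hd : G2del q ≠ 0 := ne_of_gt hδ
    unfold G2del G2c G2xi at *
    field_simp at *
    ring
  · intro h1
    have : q ^ 2 - 1 ≠ 0 := by
      intro h; apply h1; nlinarith
    positivity
  · constructor
    · intro h
      have h4 : q ^ 4 ≠ 0 := pow_ne_zero _ hq0
      rw [div_eq_zero_iff] at h
      rcases h with h | h
      · rcases mul_eq_zero.mp h with h | h
        · have : q ^ 2 = 1 := by nlinarith [sq_nonneg (q^2-1)]
          nlinarith
        · nlinarith
      · exact absurd h h4
    · rintro rfl; norm_num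
end

section
/- For every real number q > 0 and all real x, y, the exact Taylor expansion f_q(x, δ(q) + y) = A(q)·x + B(q)·y + Λ(q)·y² holds, where A(q) = −(1 + q² + 2q⁴ + q⁶ + q⁸)/(q + q³)², B(q) = (q² − 1)²(1 + q² + q⁴)/q⁴, and Λ(q) = q⁶(1 + q² + q⁴)/((1+q²)²(1 + q² + q⁴ + q⁶ + q⁸ + q^{10} + q^{12})). -/
set_option maxHeartbeats 4000000 in
/-- The exact Taylor expansion of f_q at the trivial point (0, δ(q)):
f_q(x, δ(q)+y) = A(q)x + B(q)y + Λ(q)y². -/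
theorem G2_f_taylor (q : ℝ) (hq : 0 < q) (x y : ℝ) :
    G2f q x (G2del q + y)
      = (-((1 + q ^ 2 + 2 * q ^ 4 + q ^ 6 + q ^ 8) / (q + q ^ 3) ^ 2)) * x
        + ((q ^ 2 - 1) ^ 2 * (1 + q ^ 2 + q ^ 4) / q ^ 4) * y
        + (q ^ 6 * (1 + q ^ 2 + q ^ 4) /
            ((1 + q ^ 2) ^ 2 * (1 + q ^ 2 + q ^ 4 + q ^ 6 + q ^ 8 + q ^ 10 + q ^ 12))) * y ^ 2 := by
  have hq0 : q ≠ 0 := ne_of_gt hq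
  have hP : (0:ℝ) < 1 - q ^ 2 + q ^ 6 - q ^ 8 + q ^ 10 - q ^ 14 + q ^ 16 := by
    nlinarith [sq_nonneg (q^8 - q^7), sq_nonneg (q^7 - q^5), sq_nonneg (q^5 - q^4),
      sq_nonneg (q^4 - q^3), sq_nonneg (q^3 - q), sq_nonneg (q - 1), sq_nonneg q,
      pow_pos hq 2, pow_pos hq 4, pow_pos hq 6, pow_pos hq 8, pow_pos hq 16]
  have hd : (0:ℝ) < G2del q := by
    unfold G2del; positivity
  have hxi : G2xi q ≠ 0 := by
    unfold G2xi
    have h1 : (0:ℝ) < (1 + q ^ 2) ^ 2 := by positivity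
    have h2 : (0:ℝ) < q ^ 6 * (1 + q ^ 8) := by positivity
    positivity
  unfold G2f G2del G2c G2xi
  field_simp
  ring
end

section
/- For every real number q > 0 with q ≠ 1, there exists ε > 0 such that for all real α, t with α ≥ 0, t ≤ δ(q), and 0 < √(α² + (t − δ(q))²) < ε, one has f_q(α, t) < 0. (Consequently, no functional γ_{α,t} with (α,t) in this punctured neighborhood of the trivial point (0, δ(q)) is an annular state, so the trivial representation is isolated among admissible representations and (G₂)_q has property (T).) -/
set_option maxHeartbeats 1000000 in
/-- For q > 0, q ≠ 1, the function f_q is strictly negative on a punctured neighborhood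
of the trivial point (0, δ(q)) inside the region {α ≥ 0, t ≤ δ(q)}; hence the trivial
representation is isolated among admissible representations and (G₂)_q has property (T). -/
theorem G2_propertyT_estimate (q : ℝ) (hq : 0 < q) (hq1 : q ≠ 1) :
    ∃ ε > 0, ∀ α t : ℝ, 0 ≤ α → t ≤ G2del q →
      0 < Real.sqrt (α ^ 2 + (t - G2del q) ^ 2) →
      Real.sqrt (α ^ 2 + (t - G2del q) ^ 2) < ε →
      G2f q α t < 0 := by
  have hq0 : q ≠ 0 := ne_of_gt hq
  have h8 : (1 : ℝ) + q ^ 8 ≠ 0 := by positivity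
  have h44 : q ^ 4 + 1 / q ^ 4 ≠ 0 := by positivity
  -- positivity of δ
  have hdpos : 0 < G2del q := by unfold G2del; positivity
  have hdne : G2del q ≠ 0 := ne_of_gt hdpos
  -- positivity of ξ
  have hP1 : (0:ℝ) < 1 - q ^ 4 + q ^ 6 := by nlinarith [sq_nonneg (q ^ 2 * (q - 1) * (q + 1)), sq_nonneg (q ^ 3 - q), sq_nonneg q, sq_nonneg (q ^ 2 - 2/3), pow_pos hq 2]
  have hP2 : (0:ℝ) < 1 - q ^ 2 + q ^ 6 := by nlinarith [sq_nonneg (q ^ 2 - 1), sq_nonneg (q ^ 3 - q), pow_pos hq 2, sq_nonneg (q ^ 2 - 2/3)]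
  have hP : (0:ℝ) < 1 - q ^ 2 + q ^ 6 - q ^ 8 + q ^ 10 - q ^ 14 + q ^ 16 := by
    have hmul : (1 + q ^ 2) * (1 - q ^ 2 + q ^ 6 - q ^ 8 + q ^ 10 - q ^ 14 + q ^ 16)
        = (1 - q ^ 4 + q ^ 6) + q ^ 12 * (1 - q ^ 2 + q ^ 6) := by ring
    have h12 : (0:ℝ) < q ^ 12 := by positivity
    nlinarith [mul_pos h12 hP2, sq_nonneg q]
  have hxpos : 0 < G2xi q := by
    unfold G2xi
    positivity
  have hxne : G2xi q ≠ 0 := ne_of_gt hxpos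
  -- the three rational-function identities
  have hNa : G2del q * (G2c q + 2) * G2c q - G2xi q + (G2c q) ^ 2 + 1
      = -(2 * (1 + q ^ 4) * (1 + q ^ 10 + q ^ 20) / (q ^ 8 * (1 + q ^ 8))) := by
    unfold G2del G2c G2xi; field_simp; ring
  have hN2 : G2del q * ((G2c q) ^ 2 - 2 * G2c q - 2) + G2xi q + (G2c q) ^ 2 - 2 * G2c q - 1
      = -(2 * (1 - q ^ 4 + q ^ 8) * (1 + q ^ 10 + q ^ 20) / (q ^ 10 * (1 + q ^ 8))) := by
    unfold G2del G2c G2xi; field_simp; ring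
  have hNS : (G2del q * G2c q + G2del q + G2c q)
      + (G2del q * ((G2c q) ^ 2 - 2 * G2c q - 2) + G2xi q + (G2c q) ^ 2 - 2 * G2c q - 1)
      = -((q ^ 4 - 1) ^ 2 * (1 + q ^ 10 + q ^ 20) / (q ^ 10 * (1 + q ^ 8))) := by
    unfold G2del G2c G2xi; field_simp; ring
  -- abbreviations
  set A : ℝ := (G2del q * (G2c q + 2) * G2c q - G2xi q + (G2c q) ^ 2 + 1) / (2 * G2xi q)
    with hAdef
  set B : ℝ := -(G2del q * ((G2c q) ^ 2 - 2 * G2c q - 2) + G2xi q + (G2c q) ^ 2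
      - 2 * G2c q - 1) / (2 * G2del q * G2xi q) with hBdef
  set Sg : ℝ := -((G2del q * G2c q + G2del q + G2c q)
      + (G2del q * ((G2c q) ^ 2 - 2 * G2c q - 2) + G2xi q + (G2c q) ^ 2
        - 2 * G2c q - 1)) / G2xi q with hSdef
  -- signs
  have hA : A < 0 := by
    rw [hAdef, hNa]
    apply div_neg_of_neg_of_pos
    · have : (0:ℝ) < 2 * (1 + q ^ 4) * (1 + q ^ 10 + q ^ 20) / (q ^ 8 * (1 + q ^ 8)) := by
        positivity
      linarith
    · positivity
  have hB : 0 < B := by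
    rw [hBdef, hN2]
    have h48 : (0:ℝ) < 1 - q ^ 4 + q ^ 8 := by nlinarith [sq_nonneg (q ^ 4 - 1), pow_pos hq 4]
    rw [neg_neg]
    positivity
  have hSg : 0 < Sg := by
    rw [hSdef, hNS]
    have hq41 : q ^ 4 - 1 ≠ 0 := by
      intro h
      rcases lt_or_gt_of_ne hq1 with h1 | h1
      · have : q ^ 4 < 1 := pow_lt_one₀ hq.le h1 (by norm_num)
        linarith
      · have : 1 < q ^ 4 := one_lt_pow₀ h1 (by norm_num)
        linarith
    rw [neg_neg]
    positivity
  -- key identity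
  have hkey : ∀ α t : ℝ, G2f q α t
      = A * α - (G2del q - t) * (Sg - B * (G2del q - t)) := by
    intro α t
    rw [G2f, hAdef, hBdef, hSdef]
    field_simp
    ring
  -- choose ε
  refine ⟨Sg / B, div_pos hSg hB, ?_⟩
  intro α t hα ht hpos hlt
  set d := G2del q
  have hu0 : 0 ≤ d - t := sub_nonneg.2 ht
  have hsq : d - t ≤ Real.sqrt (α ^ 2 + (t - d) ^ 2) := by
    rw [← Real.sqrt_sq hu0]
    apply Real.sqrt_le_sqrt
    nlinarith [sq_nonneg α]
  have hu_lt : d - t < Sg / B := lt_of_le_of_lt hsq hlt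
  have hSu : 0 < Sg - B * (d - t) := by
    have := (lt_div_iff₀ hB).mp hu_lt
    nlinarith
  have hin : 0 < α ^ 2 + (t - d) ^ 2 := Real.sqrt_pos.mp hpos
  rw [hkey]
  rcases eq_or_lt_of_le hα with h0 | h0
  · -- α = 0, so d - t > 0
    have hune : d - t ≠ 0 := by
      intro h
      rw [← h0] at hin
      nlinarith
    have hupos : 0 < d - t := lt_of_le_of_ne hu0 (Ne.symm hune)
    have : 0 < (d - t) * (Sg - B * (d - t)) := mul_pos hupos hSu
    nlinarith
  · have h1 : A * α < 0 := mul_neg_of_neg_of_pos hA h0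
    have h2 : 0 ≤ (d - t) * (Sg - B * (d - t)) := mul_nonneg hu0 hSu.le
    nlinarith
end

section
/- Let q > 0 be real, H = ℂ⁷ with standard orthonormal basis e₁, …, e₇, let w = (q⁻⁵, q⁻⁴, q⁻¹, 1, q, q⁴, q⁵), and define R ∈ H ⊗ H by R = Σ_{i=1}^{7} (−1)^{i+1} w_i · e_i ⊗ e_{8−i}, viewed as a linear map R : ℂ → H ⊗ H with adjoint R* : H ⊗ H → ℂ. Then (1_H ⊗ R*) ∘ (R ⊗ 1_H) = 1_H and (R* ⊗ 1_H) ∘ (1_H ⊗ R) = 1_H, and ‖R(1)‖² = Σ_{i=1}^{7} w_i² = q^{10} + q⁸ + q² + 1 + q⁻² + q⁻⁸ + q⁻¹⁰. -/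
open Complex

/-- The diagonal entries w = (q⁻⁵, q⁻⁴, q⁻¹, 1, q, q⁴, q⁵) of W = π(K_{2ρ})^{−1/2}. -/
noncomputable def G2w (q : ℝ) : Fin 7 → ℝ :=
  ![1 / q ^ 5, 1 / q ^ 4, 1 / q, 1, q, q ^ 4, q ^ 5]

/-- The coefficients of the duality vector R(1) = Σᵢ (−1)^{i+1} wᵢ eᵢ ⊗ e_{8−i} ∈ H ⊗ H,
recorded via the identification of H ⊗ H with ℂ^{7×7}: the (i,j) entry is
(−1)^{i+1} wᵢ if j = 8 − i and 0 otherwise (indices here are 0-based, so 8 − i is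
`Fin.rev`). -/
noncomputable def G2R (q : ℝ) : Fin 7 × Fin 7 → ℂ :=
  fun p => if p.2 = p.1.rev then ((-1 : ℂ) ^ (p.1 : ℕ) * (G2w q p.1 : ℂ)) else 0

/-- The map R ⊗ 1_H : H → H ⊗ H ⊗ H, with tensor powers of H = ℂ⁷ identified with
functions on products of `Fin 7`. -/
noncomputable def G2RtensorId (q : ℝ) (x : Fin 7 → ℂ) : Fin 7 × Fin 7 × Fin 7 → ℂ :=
  fun p => G2R q (p.1, p.2.1) * x p.2.2

/-- The map 1_H ⊗ R* : H ⊗ H ⊗ H → H, where R* is the Hilbert space adjoint of R. -/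
noncomputable def G2IdtensorRstar (q : ℝ) (y : Fin 7 × Fin 7 × Fin 7 → ℂ) : Fin 7 → ℂ :=
  fun i => ∑ j : Fin 7, ∑ k : Fin 7, (starRingEnd ℂ) (G2R q (j, k)) * y (i, j, k)

/-- The map 1_H ⊗ R : H → H ⊗ H ⊗ H. -/
noncomputable def G2IdtensorR (q : ℝ) (x : Fin 7 → ℂ) : Fin 7 × Fin 7 × Fin 7 → ℂ :=
  fun p => x p.1 * G2R q (p.2.1, p.2.2)

/-- The map R* ⊗ 1_H : H ⊗ H ⊗ H → H. -/
noncomputable def G2RstartensorId (q : ℝ) (y : Fin 7 × Fin 7 × Fin 7 → ℂ) : Fin 7 → ℂ :=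
  fun k => ∑ i : Fin 7, ∑ j : Fin 7, (starRingEnd ℂ) (G2R q (i, j)) * y (i, j, k)


lemma G2wv (q : ℝ) : G2w q 0 = 1/q^5 ∧ G2w q 1 = 1/q^4 ∧ G2w q 2 = 1/q ∧ G2w q 3 = 1
    ∧ G2w q 4 = q ∧ G2w q 5 = q^4 ∧ G2w q 6 = q^5 := ⟨rfl,rfl,rfl,rfl,rfl,rfl,rfl⟩

lemma G2key (q : ℝ) (hq : 0 < q) (i : Fin 7) :
    (starRingEnd ℂ) ((-1 : ℂ) ^ ((i.rev : Fin 7) : ℕ) * (G2w q i.rev : ℂ))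
      * ((-1 : ℂ) ^ ((i : Fin 7) : ℕ) * (G2w q i : ℂ)) = 1 := by
  have hq0 : (q:ℂ) ≠ 0 := Complex.ofReal_ne_zero.2 (ne_of_gt hq)
  fin_cases i <;>
    · simp [map_mul, Complex.conj_ofReal, (G2wv q).1, (G2wv q).2.1, (G2wv q).2.2.1,
        (G2wv q).2.2.2.1, (G2wv q).2.2.2.2.1, (G2wv q).2.2.2.2.2.1, (G2wv q).2.2.2.2.2.2,
        show (Fin.rev (0:Fin 7)) = 6 from rfl, show (Fin.rev (1:Fin 7)) = 5 from rfl,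
        show (Fin.rev (2:Fin 7)) = 4 from rfl, show (Fin.rev (3:Fin 7)) = 3 from rfl,
        show (Fin.rev (4:Fin 7)) = 2 from rfl, show (Fin.rev (5:Fin 7)) = 1 from rfl,
        show (Fin.rev (6:Fin 7)) = 0 from rfl,
        show (((0:Fin 7)):ℕ) = 0 from rfl, show (((1:Fin 7)):ℕ) = 1 from rfl,
        show (((2:Fin 7)):ℕ) = 2 from rfl, show (((3:Fin 7)):ℕ) = 3 from rfl,
        show (((4:Fin 7)):ℕ) = 4 from rfl, show (((5:Fin 7)):ℕ) = 5 from rfl,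
        show (((6:Fin 7)):ℕ) = 6 from rfl]
      try push_cast
      try field_simp
      try ring

lemma G2sumR (q : ℝ) (j : Fin 7) (f : Fin 7 → ℂ) :
    ∑ k : Fin 7, (starRingEnd ℂ) (G2R q (j, k)) * f k
      = (starRingEnd ℂ) ((-1 : ℂ) ^ (j : ℕ) * (G2w q j : ℂ)) * f j.rev := by
  rw [Finset.sum_eq_single j.rev]
  · simp [G2R]
  · intro k _ hk; simp [G2R, hk]
  · simp

/-- The pair (R, R*) solves the conjugate equations for the fundamental 7-dimensional
representation of U_q(𝔤₂), and ‖R(1)‖² = Σ wᵢ² = δ(q). -/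
theorem G2_conjugate_equations (q : ℝ) (hq : 0 < q) :
    (∀ x : Fin 7 → ℂ, G2IdtensorRstar q (G2RtensorId q x) = x)
      ∧ (∀ x : Fin 7 → ℂ, G2RstartensorId q (G2IdtensorR q x) = x)
      ∧ ∑ p : Fin 7 × Fin 7, ‖G2R q p‖ ^ 2 = ∑ i : Fin 7, (G2w q i) ^ 2
      ∧ ∑ i : Fin 7, (G2w q i) ^ 2
          = q ^ 10 + q ^ 8 + q ^ 2 + 1 + 1 / q ^ 2 + 1 / q ^ 8 + 1 / q ^ 10 := by
  have hq0 : q ≠ 0 := ne_of_gt hq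
  refine ⟨?_, ?_, ?_, ?_⟩
  · intro x
    funext i
    unfold G2IdtensorRstar G2RtensorId
    simp only [G2sumR]
    rw [Finset.sum_eq_single i.rev]
    · have h1 : G2R q (i, i.rev) = (-1 : ℂ) ^ (i : ℕ) * (G2w q i : ℂ) := by simp [G2R]
      rw [h1, Fin.rev_rev, ← mul_assoc, G2key q hq i, one_mul]
    · intro j _ hj
      have h0 : G2R q (i, j) = 0 := by
        simp only [G2R]
        rw [if_neg]
        intro h; exact hj h
      simp [h0]
    · simp
  · intro x
    funext k
    unfold G2RstartensorId G2IdtensorR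
    simp only [G2sumR]
    rw [Finset.sum_eq_single k]
    · have h1 : G2R q (k.rev, k) = (-1 : ℂ) ^ ((k.rev : Fin 7) : ℕ) * (G2w q k.rev : ℂ) := by
        simp [G2R, Fin.rev_rev]
      have hk := G2key q hq k.rev
      rw [Fin.rev_rev] at hk
      rw [h1, mul_comm (x k), ← mul_assoc, hk, one_mul]
    · intro i _ hi
      have h0 : G2R q (i.rev, k) = 0 := by
        simp only [G2R]
        rw [if_neg]
        rw [Fin.rev_rev]
        intro h; exact hi h.symm
      simp [h0]
    · simp
  · rw [Fintype.sum_prod_type]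
    refine Finset.sum_congr rfl fun i _ => ?_
    rw [Finset.sum_eq_single i.rev]
    · simp [G2R, sq_abs]
    · intro j _ hj
      have h0 : G2R q (i, j) = 0 := by
        simp only [G2R]
        rw [if_neg]
        intro h; exact hj h
      simp [h0]
    · simp
  · simp [Fin.sum_univ_seven, (G2wv q).1, (G2wv q).2.1, (G2wv q).2.2.1,
      (G2wv q).2.2.2.1, (G2wv q).2.2.2.2.1, (G2wv q).2.2.2.2.2.1, (G2wv q).2.2.2.2.2.2]
    field_simp
    ring
end
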